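/- A map X_1 → X_2 in bSet is weakly surjective if and only if for all vector spaces V, W, the induced map CHom(X_2 ⊗ V, W) → CHom(X_1 ⊗ V, W) on action sets is injective. -/
import Mathlib


/-!
STATEMENT 10: A map `X₁ → X₂` in `bSet` is weakly surjective (precomposition is injective on
maps to arbitrary discrete sets, i.e. on locally constant maps) if and only if for all vector
spaces `V, W`, the induced map `CHom(X₂ ⊗ V, W) → CHom(X₁ ⊗ V, W)` on action sets is injective.
We work with the topological incarnation of (locally compact) objects of `bSet`; an action
`X × V → W` is a map `X → Hom(V, W)` which is locally constant in the `X`-variable (`V`, `W`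
carrying the discrete topology).
-/

universe u

theorem stmt_10 {X₁ X₂ : Type u} [TopologicalSpace X₁] [TopologicalSpace X₂]
    [LocallyCompactSpace X₁] [TotallyDisconnectedSpace X₁] [T2Space X₁]
    [LocallyCompactSpace X₂] [TotallyDisconnectedSpace X₂] [T2Space X₂]
    (φ : X₁ → X₂) (hφ : Continuous φ) :
    (∀ (Y : Type u) (f g : X₂ → Y), IsLocallyConstant f → IsLocallyConstant g →
        f ∘ φ = g ∘ φ → f = g) ↔
      (∀ (V W : Type u) [AddCommGroup V] [Module ℂ V] [AddCommGroup W] [Module ℂ W],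
        ∀ f g : {h : X₂ → V →ₗ[ℂ] W // ∀ v : V, IsLocallyConstant fun x => h x v},
          (∀ x₁ : X₁, f.1 (φ x₁) = g.1 (φ x₁)) → f = g) := by
  constructor
  · intro H V W _ _ _ _ f g hfg
    apply Subtype.ext
    funext x
    apply LinearMap.ext
    intro v
    have := H W (fun x => f.1 x v) (fun x => g.1 x v) (f.2 v) (g.2 v)
      (by funext x₁; simp [Function.comp, hfg x₁])
    exact congrFun this x
  · intro H Y f g hf hg hcomp
    classical
    set F : X₂ → (ULift.{u} ℂ →ₗ[ℂ] (Y →₀ ℂ)) :=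
      fun x => (Finsupp.lsingle (f x)).comp (ULift.moduleEquiv.toLinearMap) with hF
    set G : X₂ → (ULift.{u} ℂ →ₗ[ℂ] (Y →₀ ℂ)) :=
      fun x => (Finsupp.lsingle (g x)).comp (ULift.moduleEquiv.toLinearMap) with hG
    have hFlc : ∀ v : ULift.{u} ℂ, IsLocallyConstant fun x => F x v := by
      intro v
      exact (hf.comp (fun y => Finsupp.single y v.down) :)
    have hGlc : ∀ v : ULift.{u} ℂ, IsLocallyConstant fun x => G x v := by
      intro v
      exact (hg.comp (fun y => Finsupp.single y v.down) :)
    have key := H (ULift.{u} ℂ) (Y →₀ ℂ) ⟨F, hFlc⟩ ⟨G, hGlc⟩ (by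
      intro x₁
      have : f (φ x₁) = g (φ x₁) := congrFun hcomp x₁
      simp [hF, hG, this])
    funext x
    have hFG : F x = G x := congrFun (congrArg Subtype.val key) x
    have h1 : Finsupp.single (f x) (1 : ℂ) = Finsupp.single (g x) 1 := by
      have := congrArg (fun (L : ULift.{u} ℂ →ₗ[ℂ] (Y →₀ ℂ)) => L ⟨1⟩) hFG
      simpa [hF, hG] using this
    exact Finsupp.single_left_injective one_ne_zero h1
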